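/- Every decreasing instance of a-GASP admits a Nash stable assignment. -/

import Mathlib

/-- The group of agents assigned to activity `a` under assignment `π`
(`none` stands for the void activity `a_∅`). -/
def grp {ι α : Type*} [Fintype ι] [DecidableEq α] (π : ι → Option α) (a : α) : Finset ι :=
  Finset.univ.filter (fun i => π i = some a)

/-- An assignment is individually rational if every agent assigned to a non-void
activity `a` approves the alternative `(a, size of the group doing a)`.
`S i a` is the set of group sizes `k` such that agent `i` approves `(a, k)`. -/
def IndivRat {ι α : Type*} [Fintype ι] [DecidableEq α]
    (S : ι → α → Finset ℕ) (π : ι → Option α) : Prop :=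
  ∀ i a, π i = some a → (grp π a).card ∈ S i a

/-- Nash stability: individual rationality plus no agent assigned to the void
activity approves joining an existing group. -/
def NashStable {ι α : Type*} [Fintype ι] [DecidableEq α]
    (S : ι → α → Finset ℕ) (π : ι → Option α) : Prop :=
  IndivRat S π ∧ ∀ i a, π i = none → (grp π a).card + 1 ∉ S i a

/-- The number of agents assigned to a non-void activity. -/
def numActive {ι α : Type*} [Fintype ι] [DecidableEq α] (π : ι → Option α) : ℕ :=
  (Finset.univ.filter (fun i => π i ≠ none)).card

lemma grp_update {ι α : Type*} [Fintype ι] [DecidableEq ι] [DecidableEq α]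
    (π : ι → Option α) (i : ι) (v : Option α) (b : α) :
    grp (Function.update π i v) b =
      if v = some b then insert i ((grp π b).erase i) else (grp π b).erase i := by
  ext m
  rcases eq_or_ne m i with rfl | h
  · simp [grp, Function.update]
    split <;> simp_all
  · simp [grp, Function.update_of_ne h, h]
    split <;> simp [h]

lemma Phi_update {ι α : Type*} [Fintype ι] [DecidableEq ι]
    (φ : ι → Option α → ℕ) (π : ι → Option α) (i : ι) (v : Option α) :
    (∑ m, φ m (Function.update π i v m)) + φ i (π i) = (∑ m, φ m (π m)) + φ i v := by
  classical
  have h1 : (∑ m, φ m (Function.update π i v m))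
      = φ i v + ∑ m ∈ Finset.univ.erase i, φ m (π m) := by
    rw [← Finset.add_sum_erase _ _ (Finset.mem_univ i), Function.update_self]
    congr 1
    exact Finset.sum_congr rfl fun m hm =>
      congrArg _ (Function.update_of_ne (Finset.mem_erase.mp hm).1 _ _)
  have h2 : (∑ m, φ m (π m)) = φ i (π i) + ∑ m ∈ Finset.univ.erase i, φ m (π m) :=
    (Finset.add_sum_erase _ _ (Finset.mem_univ i)).symm
  rw [h1, h2]; ring

/-- Every decreasing a-GASP instance (each agent's approved group sizes for each
activity form a down-set [1, u]) admits a Nash stable assignment. -/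
theorem stmt7 {ι α : Type*} [Fintype ι] [DecidableEq ι] [DecidableEq α] [Fintype α]
    (S : ι → α → Finset ℕ)
    (hdec : ∀ (i : ι) (a : α), ∃ u : ℕ, S i a = Finset.Icc 1 u) :
    ∃ π : ι → Option α, NashStable S π := by
  classical
  choose u hu using hdec
  set n := Fintype.card ι with hn
  set φ : ι → Option α → ℕ := fun i o => o.elim 0 (fun a => n * n + 1 + min (u i a) n) with hφ
  set Φ : (ι → Option α) → ℕ := fun π => ∑ m, φ m (π m) with hΦ
  -- pick an IR assignment maximizing Φ
  obtain ⟨π, hπIR, hmax⟩ : ∃ π, IndivRat S π ∧ ∀ π', IndivRat S π' → Φ π' ≤ Φ π := by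
    have hne : ((Finset.univ : Finset (ι → Option α)).filter (fun π => IndivRat S π)).Nonempty := by
      refine ⟨fun _ => none, ?_⟩
      simp only [Finset.mem_filter, Finset.mem_univ, true_and]
      intro i a h; simp at h
    obtain ⟨π, hπ, hmax⟩ := Finset.exists_max_image _ Φ hne
    simp only [Finset.mem_filter, Finset.mem_univ, true_and] at hπ hmax
    exact ⟨π, hπ, hmax⟩
  refine ⟨π, hπIR, ?_⟩
  intro i a hi hmem
  set k := (grp π a).card with hk
  have hiGrpAll : ∀ b, i ∉ grp π b := fun b h => by
    have : π i = some b := by simpa [grp] using h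
    rw [hi] at this; exact nomatch this
  have hiGrp : i ∉ grp π a := hiGrpAll a
  have hinsert : ∀ b, grp (Function.update π i (some b)) b = insert i (grp π b) := by
    intro b
    rw [grp_update, if_pos rfl, Finset.erase_eq_of_notMem (hiGrpAll b)]
  have hother : ∀ b c, b ≠ c → grp (Function.update π i (some b)) c = grp π c := by
    intro b c hbc
    rw [grp_update, if_neg (by simp [hbc])]
    exact Finset.erase_eq_of_notMem (hiGrpAll c)
  have hk1n : k + 1 ≤ n := by
    have := Finset.card_le_univ (insert i (grp π a))
    rwa [Finset.card_insert_of_notMem hiGrp] at this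
  have huia : k + 1 ≤ u i a := by
    have := hmem; rw [hu] at this; exact (Finset.mem_Icc.mp this).2
  by_cases hall : ∀ j ∈ grp π a, k + 1 ∈ S j a
  · -- agent i can simply join a : contradiction with maximality
    set π' := Function.update π i (some a) with hπ'
    have hcard : (grp π' a).card = k + 1 := by
      rw [hπ', hinsert, Finset.card_insert_of_notMem hiGrp]
    have hIR' : IndivRat S π' := by
      intro m b hm
      rcases eq_or_ne m i with rfl | hmi
      · rw [hπ', Function.update_self] at hm
        obtain rfl : a = b := by injection hm
        rw [hcard]; exact hmem
      · rw [hπ', Function.update_of_ne hmi] at hm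
        rcases eq_or_ne b a with rfl | hba
        · rw [hcard]
          exact hall m (by simp [grp, hm])
        · rw [hπ', hother a b (Ne.symm hba)]
          exact hπIR m b hm
    have := hmax π' hIR'
    have hΦ' : Φ π' + φ i (π i) = Φ π + φ i (some a) := Phi_update φ π i (some a)
    rw [hi] at hΦ'
    have h0 : φ i none = 0 := rfl
    have h1 : φ i (some a) = n * n + 1 + min (u i a) n := rfl
    omega
  · -- some member j of the group disapproves size k+1 : swap j for i
    push_neg at hall
    obtain ⟨j, hjGrp, hjdis⟩ := hall
    have hjπ : π j = some a := by simpa [grp] using hjGrp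
    have hij : i ≠ j := fun h => by rw [h, hjπ] at hi; exact nomatch hi
    have hk1 : 1 ≤ k := Finset.card_pos.mpr ⟨j, hjGrp⟩
    have huja : u j a ≤ k := by
      by_contra h
      exact hjdis (by rw [hu]; exact Finset.mem_Icc.mpr ⟨by omega, by omega⟩)
    set πj := Function.update π j none with hπj
    set π'' := Function.update πj i (some a) with hπ''
    have hπji : πj i = none := by rw [hπj, Function.update_of_ne hij, hi]
    have hgrpj : ∀ b, grp πj b = (grp π b).erase j := by
      intro b; rw [hπj, grp_update, if_neg (by simp)]
    have hiGrpj : ∀ b, i ∉ grp πj b := fun b => by simp [grp, hπji]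
    have hgrp''a : grp π'' a = insert i ((grp π a).erase j) := by
      rw [hπ'', grp_update, if_pos rfl, hgrpj,
        Finset.erase_eq_of_notMem (by rw [← hgrpj]; exact hiGrpj a)]
    have hgrp''o : ∀ b, b ≠ a → grp π'' b = (grp π b).erase j := by
      intro b hba
      rw [hπ'', grp_update, if_neg (by simp [Ne.symm hba]), hgrpj,
        Finset.erase_eq_of_notMem (by rw [← hgrpj]; exact hiGrpj b)]
    have hcard'' : (grp π'' a).card = k := by
      rw [hgrp''a, Finset.card_insert_of_notMem (fun h => hiGrp (Finset.mem_of_mem_erase h)),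
        Finset.card_erase_of_mem hjGrp]
      omega
    have hIR'' : IndivRat S π'' := by
      intro m b hm
      rcases eq_or_ne m i with rfl | hmi
      · rw [hπ'', Function.update_self] at hm
        obtain rfl : a = b := by injection hm
        rw [hcard'', hu]
        exact Finset.mem_Icc.mpr ⟨hk1, by omega⟩
      · rw [hπ'', Function.update_of_ne hmi, hπj] at hm
        rcases eq_or_ne m j with rfl | hmj
        · rw [Function.update_self] at hm; exact nomatch hm
        · rw [Function.update_of_ne hmj] at hm
          rcases eq_or_ne b a with rfl | hba
          · rw [hcard'']; exact hπIR m b hm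
          · rw [hgrp''o b hba,
              Finset.erase_eq_of_notMem (fun h => by
                have hb : π j = some b := by simpa [grp] using h
                rw [hjπ] at hb
                have hab : a = b := by injection hb
                exact hba hab.symm)]
            exact hπIR m b hm
    have hle := hmax π'' hIR''
    have e1 : Φ πj + φ j (π j) = Φ π + φ j none := Phi_update φ π j none
    have e2 : Φ π'' + φ i (πj i) = Φ πj + φ i (some a) := Phi_update φ πj i (some a)
    rw [hjπ] at e1
    rw [hπji] at e2
    have hφj : φ j (some a) = n * n + 1 + min (u j a) n := rfl
    have hφi : φ i (some a) = n * n + 1 + min (u i a) n := rfl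
    have hφn : ∀ m : ι, φ m none = 0 := fun m => rfl
    rw [hφn] at e1 e2
    have hminj : min (u j a) n ≤ k := le_trans (min_le_left _ _) huja
    have hmini : k + 1 ≤ min (u i a) n := le_min huia hk1n
    omega
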